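/- arXiv:1512.08760 — 2 statements merged into one kernel-verified Lean document; each statement's English description precedes it below -/
import Mathlib

section
/- Let X be a set with the P_Z(S)-metric d(x,y) = ∅ if x = y, L otherwise, where L, Z are nonempty subsets of S. If L ⊊ Z, then the only open sets of the induced topology are ∅ and X (the indiscrete topology). -/
/-- for the discrete-type metric with L ⊊ Z, the induced topology is
indiscrete: the only open sets are ∅ and X. -/
theorem stmt13 {S X : Type*} [Nonempty X] [DecidableEq X]
    (Z L : Set S) (hZ : Z.Nonempty) (hL : L.Nonempty) (hLZ : L ⊂ Z)
    (d : X → X → Set S)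
    (hd : ∀ x y, d x y = if x = y then (∅ : Set S) else L) :
    ∀ U : Set X,
      (∀ x ∈ U, ∃ ε : Set S, Z ⊆ ε ∧ {y : X | d x y ⊂ ε} ⊆ U) ↔
      (U = ∅ ∨ U = Set.univ) := by
  intro U
  constructor
  · intro h
    rcases U.eq_empty_or_nonempty with he | ⟨x, hx⟩
    · exact Or.inl he
    · right
      obtain ⟨ε, hZe, hball⟩ := h x hx
      apply Set.eq_univ_of_univ_subset
      intro y _
      apply hball
      show d x y ⊂ ε
      rw [hd]
      have hLe : L ⊂ ε := lt_of_lt_of_le hLZ hZe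
      split
      · exact Set.empty_ssubset.mpr (hL.mono hLe.le)
      · exact hLe
  · rintro (rfl | rfl)
    · intro x hx; exact absurd hx (Set.notMem_empty x)
    · intro x _
      exact ⟨Z, le_refl _, fun y _ => Set.mem_univ y⟩
end

section
/- Let d : ℝ × ℝ → P(ℝ) be the P_Z(ℝ)-metric d(x,y) = ∅ if x = y and {x,y} otherwise, with Z = (a,b) an open interval, a < b. Then a subset A ⊆ ℝ is open in the induced topology if and only if A ∩ (a,b) = ∅ or (a,b) ⊆ A. -/
/-- for d(x,y) = {x,y} (x ≠ y) on ℝ with Z = (a,b), a < b, a set A is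
open iff A ∩ (a,b) = ∅ or (a,b) ⊆ A. -/
theorem stmt15 (a b : ℝ) (hab : a < b)
    (d : ℝ → ℝ → Set ℝ)
    (hd : ∀ x y, d x y = if x = y then (∅ : Set ℝ) else {x, y})
    (A : Set ℝ) :
    (∀ x ∈ A, ∃ ε : Set ℝ, Set.Ioo a b ⊆ ε ∧ {y : ℝ | d x y ⊂ ε} ⊆ A) ↔
    (A ∩ Set.Ioo a b = ∅ ∨ Set.Ioo a b ⊆ A) := by
  constructor
  · intro h
    by_cases hA : A ∩ Set.Ioo a b = ∅
    · exact Or.inl hA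
    · right
      obtain ⟨x, hxA, hxI⟩ := Set.nonempty_iff_ne_empty.mpr hA
      obtain ⟨ε, hε1, hε2⟩ := h x hxA
      intro y hyI
      apply hε2
      show d x y ⊂ ε
      rw [hd]
      obtain ⟨z, hzI, hz⟩ := (Set.Ioo_infinite hab).exists_notMem_finite
        (Set.toFinite ({x, y} : Set ℝ))
      split_ifs with hxy
      · exact ⟨Set.empty_subset ε, fun he => (he (hε1 hzI)).elim⟩
      · constructor
        · intro w hw
          rcases hw with rfl | rfl
          exacts [hε1 hxI, hε1 hyI]
        · intro hsub
          exact hz (hsub (hε1 hzI))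
  · intro h x hxA
    rcases h with h | h
    · refine ⟨Set.Ioo a b, subset_rfl, ?_⟩
      intro y hy
      have hy : d x y ⊂ Set.Ioo a b := hy
      rw [hd] at hy
      split_ifs at hy with hxy
      · exact hxy ▸ hxA
      · exfalso
        have hxI : x ∈ Set.Ioo a b := hy.1 (Set.mem_insert x {y})
        exact absurd h (Set.nonempty_iff_ne_empty.mp ⟨x, hxA, hxI⟩)
    · refine ⟨insert x (Set.Ioo a b), Set.subset_insert _ _, ?_⟩
      intro y hy
      have hy : d x y ⊂ insert x (Set.Ioo a b) := hy
      rw [hd] at hy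
      split_ifs at hy with hxy
      · exact hxy ▸ hxA
      · have : y ∈ insert x (Set.Ioo a b) :=
          hy.1 (Set.mem_insert_iff.mpr (Or.inr rfl))
        rcases this with rfl | hyI
        · exact hxA
        · exact h hyI
end
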